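/- Suppose the finite simplicial graph Γ does not contain a separating intersection of links. Let α be a (non-inner) partial conjugation with multiplier y^{±1} (y a vertex). Suppose β is either a transvection fixing the generator y, or any (non-inner) partial conjugation. Then the images of α and β in Out(A_Γ) commute. -/

import Mathlib

open SimpleGraph
open scoped commutatorElement

variable {V : Type*}

/-- The link of a vertex: the set of adjacent vertices. -/
def lk (G : SimpleGraph V) (x : V) : Set V := {z | G.Adj x z}

/-- The star of a vertex: the link together with the vertex itself. -/
def st (G : SimpleGraph V) (x : V) : Set V := insert x (lk G x)

/-- `Dominates G y x` means `y ≥ x`, i.e. `lk x ⊆ st y`. -/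
def Dominates (G : SimpleGraph V) (y x : V) : Prop := lk G x ⊆ st G y

/-- `Γ` contains a domination-equivalent pair of (distinct) vertices. -/
def DomEquivPair (G : SimpleGraph V) : Prop :=
  ∃ x y : V, x ≠ y ∧ Dominates G x y ∧ Dominates G y x

/-- `S` separates `u` from `v`: both lie outside `S` and they are not joined by a path
in the induced subgraph on the complement of `S`. -/
def SeparatesFrom (G : SimpleGraph V) (S : Set V) (u v : V) : Prop :=
  ∃ (hu : u ∈ Sᶜ) (hv : v ∈ Sᶜ),
    ¬ (G.induce Sᶜ).Reachable ⟨u, hu⟩ ⟨v, hv⟩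

/-- `Γ` has a separating intersection of links: there are distinct non-adjacent vertices
`x, y` and a vertex `z` whose connected component in the induced subgraph on the
complement of `lk x ∩ lk y` contains neither `x` nor `y`. -/
def SepIntLinks (G : SimpleGraph V) : Prop :=
  ∃ x y : V, x ≠ y ∧ ¬ G.Adj x y ∧ ∃ z : V,
    SeparatesFrom G (lk G x ∩ lk G y) z x ∧ SeparatesFrom G (lk G x ∩ lk G y) z y

/-- `Y` is the vertex set of a connected component of the induced subgraph on `S`. -/
def IsCompOf (G : SimpleGraph V) (S : Set V) (Y : Set V) : Prop :=
  Y.Nonempty ∧ Y ⊆ S ∧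
    ∀ a : S, a.1 ∈ Y → ∀ b : S, ((G.induce S).Reachable a b ↔ b.1 ∈ Y)

/-- The defining relators of the right-angled Artin group of `G`. -/
def raagRels (G : SimpleGraph V) : Set (FreeGroup V) :=
  {r | ∃ x y : V, G.Adj x y ∧ r = ⁅FreeGroup.of x, FreeGroup.of y⁆}

/-- The right-angled Artin group of a graph. -/
abbrev RAAG (G : SimpleGraph V) : Type _ := PresentedGroup (raagRels G)

/-- The generator of the RAAG corresponding to a vertex. -/
def gen (G : SimpleGraph V) (x : V) : RAAG G := PresentedGroup.of x

/-- The subgroup of inner automorphisms. -/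
def Inn (H : Type*) [Group H] : Subgroup (MulAut H) := (MulAut.conj : H →* MulAut H).range

instance Inn.normal (H : Type*) [Group H] : (Inn H).Normal := by
  constructor
  intro n hn g
  obtain ⟨h, rfl⟩ := hn
  refine ⟨g h, ?_⟩
  ext x
  simp [MulAut.conj]

/-- The outer automorphism group `Out(A_Γ)` of the RAAG of `G`. -/
abbrev OutG (G : SimpleGraph V) := MulAut (RAAG G) ⧸ Inn (RAAG G)

/-- A group contains a subgroup isomorphic to the free group of rank 2. -/
def HasFreeRankTwo (H : Type*) [Group H] : Prop :=
  ∃ K : Subgroup H, Nonempty (↥K ≃* FreeGroup (Fin 2))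

/-- A group is virtually nilpotent. -/
def VirtNilpotent (H : Type*) [Group H] : Prop :=
  ∃ K : Subgroup H, K.FiniteIndex ∧ Group.IsNilpotent ↥K

/-- `φ` is a transvection with multiplier `x^ε` acting on the generator `y`
(either a right or a left transvection). -/
def IsTransvection (G : SimpleGraph V) (φ : MulAut (RAAG G)) (x y : V) (ε : ℤ) : Prop :=
  x ≠ y ∧ Dominates G x y ∧ (ε = 1 ∨ ε = -1) ∧
  (φ (gen G y) = gen G y * (gen G x) ^ ε ∨ φ (gen G y) = (gen G x) ^ ε * gen G y) ∧
  ∀ z : V, z ≠ y → φ (gen G z) = gen G z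

/-- `φ` is a non-inner partial conjugation with multiplier `x^ε`, conjugating exactly the
generators in the connected component `Y` of the complement of `st x`. -/
def IsPartialConj (G : SimpleGraph V) (φ : MulAut (RAAG G)) (x : V) (ε : ℤ) (Y : Set V) : Prop :=
  (ε = 1 ∨ ε = -1) ∧ IsCompOf G ((st G x)ᶜ) Y ∧ ((st G x ∪ Y)ᶜ).Nonempty ∧
  (∀ y ∈ Y, φ (gen G y) = (gen G x) ^ (-ε) * gen G y * (gen G x) ^ ε) ∧
  ∀ z : V, z ∉ Y → φ (gen G z) = gen G z

/-- A domination chain, listed with the dominant member first. -/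
def IsDomChain (G : SimpleGraph V) (l : List V) : Prop :=
  l ≠ [] ∧ l.Nodup ∧ l.Chain' (fun a b => Dominates G a b)

/-- The domination depth of a vertex: the maximal length of a domination chain with
top member `x`. -/
noncomputable def domDepth (G : SimpleGraph V) (x : V) : ℕ :=
  sSup {n | ∃ l : List V, IsDomChain G l ∧ l.head? = some x ∧ l.length = n + 1}

/-- A star-separation preserving domination chain with top member `xm` and
bottom member `x1`. -/
def IsSSPChain (G : SimpleGraph V) (l : List V) (xm x1 : V) : Prop :=
  IsDomChain G l ∧ l.head? = some xm ∧ l.getLast? = some x1 ∧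
  ∃ Y1 Y2 : Set V, IsCompOf G ((st G x1)ᶜ) Y1 ∧ IsCompOf G ((st G x1)ᶜ) Y2 ∧
    Y1 ≠ Y2 ∧ ¬ Y1 ⊆ st G xm ∧ ¬ Y2 ⊆ st G xm

/-- The star-separation depth of a vertex: `1 +` the maximal length of a star-separation
preserving chain with top member `x` (this is `0` if there is no such chain, as then the
set below is empty). -/
noncomputable def ssDepth (G : SimpleGraph V) (x : V) : ℕ :=
  sSup {n | ∃ (l : List V) (x1 : V), IsSSPChain G l x x1 ∧ l.length = n}

/-- The depth of a vertex. -/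
noncomputable def vdepth (G : SimpleGraph V) (x : V) : ℕ := max (domDepth G x) (ssDepth G x)

/-- The depth of the graph `G`. -/
noncomputable def gdepth (G : SimpleGraph V) : ℕ := sSup {n | ∃ x : V, n = vdepth G x}

/-- The set of images in `Out(A_Γ)` of all transvections and all non-inner partial
conjugations. -/
def TvPcSet (G : SimpleGraph V) : Set (OutG G) :=
  {g | ∃ φ : MulAut (RAAG G), (QuotientGroup.mk φ : OutG G) = g ∧
    ((∃ x y ε, IsTransvection G φ x y ε) ∨ (∃ x ε Y, IsPartialConj G φ x ε Y))}

/-- The subgroup `N` of `Out(A_Γ)` generated by the images of all transvections and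
all non-inner partial conjugations. -/
def Ngrp (G : SimpleGraph V) : Subgroup (OutG G) := Subgroup.closure (TvPcSet G)

section StatementSevenHelpers

variable {G : SimpleGraph V}

lemma mem_st_iff' {x z : V} : z ∈ st G x ↔ z = x ∨ G.Adj x z := by
  simp [st, lk, Set.mem_insert_iff]

lemma mem_st_compl_iff' {x z : V} : z ∈ (st G x)ᶜ ↔ z ≠ x ∧ ¬ G.Adj x z := by
  rw [Set.mem_compl_iff, mem_st_iff']; tauto

lemma induce_adj' {S : Set V} {u v : ↥S} (h : G.Adj u.1 v.1) : (G.induce S).Adj u v := h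

lemma IsCompOf.closed {S Y : Set V} (hY : IsCompOf G S Y) {u w : V}
    (hu : u ∈ Y) (hw : w ∈ S) (h : G.Adj u w) : w ∈ Y :=
  (hY.2.2 ⟨u, hY.2.1 hu⟩ hu ⟨w, hw⟩).mp (induce_adj' h).reachable

/-- The key graph-theoretic lemma: if `Y` is an "adjacency-closed" subset of the
complement of `st y` avoiding `x`, `Z` similarly for `x` avoiding `y`, and they meet,
then `Γ` has a separating intersection of links. -/
lemma sil_of_comps {x y : V} (hxy : x ≠ y) (hnadj : ¬ G.Adj x y) {Y Z : Set V}
    (hYs : Y ⊆ (st G y)ᶜ) (hZs : Z ⊆ (st G x)ᶜ)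
    (hYc : ∀ u w, u ∈ Y → w ∈ (st G y)ᶜ → G.Adj u w → w ∈ Y)
    (hZc : ∀ u w, u ∈ Z → w ∈ (st G x)ᶜ → G.Adj u w → w ∈ Z)
    (hxY : x ∉ Y) (hyZ : y ∉ Z) {v : V} (hvY : v ∈ Y) (hvZ : v ∈ Z) :
    SepIntLinks G := by
  have hxsy : x ∈ (st G y)ᶜ := mem_st_compl_iff'.mpr ⟨hxy, fun hh => hnadj hh.symm⟩
  have hysx : y ∈ (st G x)ᶜ := mem_st_compl_iff'.mpr ⟨hxy.symm, hnadj⟩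
  have key : ∀ (p q : ↥((lk G x ∩ lk G y)ᶜ)), (G.induce ((lk G x ∩ lk G y)ᶜ)).Walk p q →
      p.1 ∈ Y → p.1 ∈ Z → q.1 ∈ Y ∧ q.1 ∈ Z := by
    intro p q w
    induction w with
    | nil => exact fun h1 h2 => ⟨h1, h2⟩
    | @cons p m q hadj' w ih =>
      intro h1 h2
      have hadj : G.Adj p.1 m.1 := hadj'
      have hm : m.1 ∉ lk G x ∩ lk G y := m.2
      have hmx : m.1 ∈ (st G x)ᶜ := by
        rw [Set.mem_compl_iff]
        intro hmem
        rcases mem_st_iff'.mp hmem with hex | hadjx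
        · rw [hex] at hadj; exact hxY (hYc p.1 x h1 hxsy hadj)
        · have hmy : m.1 ∉ lk G y := fun hh => hm ⟨hadjx, hh⟩
          have hmney : m.1 ≠ y := by rintro hh; rw [hh] at hadjx; exact hnadj hadjx
          have hmsty : m.1 ∈ (st G y)ᶜ := mem_st_compl_iff'.mpr ⟨hmney, fun hh => hmy hh⟩
          have hmY : m.1 ∈ Y := hYc p.1 m.1 h1 hmsty hadj
          exact hxY (hYc m.1 x hmY hxsy hadjx.symm)
      have hmy : m.1 ∈ (st G y)ᶜ := by
        rw [Set.mem_compl_iff]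
        intro hmem
        rcases mem_st_iff'.mp hmem with hex | hadjy
        · rw [hex] at hadj; exact hyZ (hZc p.1 y h2 hysx hadj)
        · have hmx' : m.1 ∉ lk G x := fun hh => hm ⟨hh, hadjy⟩
          have hmnex : m.1 ≠ x := by rintro hh; rw [hh] at hadjy; exact hnadj hadjy.symm
          have hmstx : m.1 ∈ (st G x)ᶜ := mem_st_compl_iff'.mpr ⟨hmnex, fun hh => hmx' hh⟩
          have hmZ : m.1 ∈ Z := hZc p.1 m.1 h2 hmstx hadj
          exact hyZ (hZc m.1 y hmZ hysx hadjy.symm)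
      exact ih (hYc p.1 m.1 h1 hmy hadj) (hZc p.1 m.1 h2 hmx hadj)
  have hvout : v ∈ (lk G x ∩ lk G y)ᶜ := by
    rw [Set.mem_compl_iff]; rintro ⟨hh, -⟩
    exact (mem_st_compl_iff'.mp (hZs hvZ)).2 hh
  have hxout : x ∈ (lk G x ∩ lk G y)ᶜ := by
    rw [Set.mem_compl_iff]; rintro ⟨hh, -⟩; exact G.loopless.irrefl x hh
  have hyout : y ∈ (lk G x ∩ lk G y)ᶜ := by
    rw [Set.mem_compl_iff]; rintro ⟨-, hh⟩; exact G.loopless.irrefl y hh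
  refine ⟨x, y, hxy, hnadj, v, ⟨hvout, hxout, ?_⟩, ⟨hvout, hyout, ?_⟩⟩
  · intro hr
    obtain ⟨w⟩ := hr
    exact hxY (key _ _ w hvY hvZ).1
  · intro hr
    obtain ⟨w⟩ := hr
    exact hyZ (key _ _ w hvY hvZ).2

end StatementSevenHelpers

/-- The set of vertices reachable from `v` in the induced subgraph on `S`. -/
def reachSet (G : SimpleGraph V) (S : Set V) (v : V) : Set V :=
  {u | ∃ (hu : u ∈ S) (hv : v ∈ S), (G.induce S).Reachable ⟨v, hv⟩ ⟨u, hu⟩}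

section MoreHelpers
variable {G : SimpleGraph V}

lemma reachSet_subset {S : Set V} {v : V} : reachSet G S v ⊆ S := fun _ hu => hu.1

lemma mem_reachSet_self {S : Set V} {v : V} (hv : v ∈ S) : v ∈ reachSet G S v :=
  ⟨hv, hv, Reachable.refl _⟩

lemma reachSet_closed {S : Set V} {v u w : V} (hu : u ∈ reachSet G S v) (hw : w ∈ S)
    (h : G.Adj u w) : w ∈ reachSet G S v := by
  obtain ⟨hu', hv', hr⟩ := hu
  exact ⟨hw, hv', hr.trans (induce_adj' (u := ⟨u, hu'⟩) (v := ⟨w, hw⟩) h).reachable⟩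

lemma notMem_reachSet {S Y : Set V} (hY : IsCompOf G S Y) {x v : V}
    (hx : x ∈ Y) (hvS : v ∈ S) (hvY : v ∉ Y) : x ∉ reachSet G S v := by
  rintro ⟨hxS, hvS', hr⟩
  exact hvY ((hY.2.2 ⟨x, hY.2.1 hx⟩ hx ⟨v, hvS'⟩).mp hr.symm)

/-- Extensionality: automorphisms of a RAAG agreeing on generators are equal. -/
lemma raag_mulAut_ext {φ ψ : MulAut (RAAG G)} (h : ∀ v, φ (gen G v) = ψ (gen G v)) :
    φ = ψ :=
  MulEquiv.toMonoidHom_injective (PresentedGroup.ext h)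

/-- Generators of adjacent vertices commute. -/
lemma gen_commute {x y : V} (h : G.Adj x y) : Commute (gen G x) (gen G y) := by
  rw [← commutatorElement_eq_one_iff_commute]
  have h1 : (PresentedGroup.mk (raagRels G)) ⁅FreeGroup.of x, FreeGroup.of y⁆ = 1 := by
    apply (QuotientGroup.eq_one_iff _).mpr
    exact Subgroup.subset_normalClosure ⟨x, y, h, rfl⟩
  rw [map_commutatorElement] at h1
  exact h1

/-- A nonzero power of a generator is nontrivial. -/
lemma gen_zpow_ne_one (x : V) {δ : ℤ} (hδ : δ = 1 ∨ δ = -1) : (gen G x) ^ δ ≠ 1 := by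
  classical
  intro hcon
  have hrels : ∀ r ∈ raagRels G,
      FreeGroup.lift (fun v => Multiplicative.ofAdd (if v = x then (1:ℤ) else 0)) r = 1 := by
    rintro r ⟨u, w, -, rfl⟩
    rw [map_commutatorElement]
    exact commutatorElement_eq_one_iff_commute.mpr (Commute.all _ _)
  have h2 := congrArg (PresentedGroup.toGroup hrels) hcon
  rw [map_zpow, map_one] at h2
  have h3 : PresentedGroup.toGroup hrels (gen G x) = Multiplicative.ofAdd (1:ℤ) := by
    have h5 := PresentedGroup.toGroup.of hrels (x := x)
    rw [if_pos rfl] at h5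
    exact h5
  rw [h3] at h2
  have h4 := congrArg Multiplicative.toAdd h2
  rcases hδ with rfl | rfl <;> simp at h4

lemma conj_conj_comm {H : Type*} [Group H] {a b : H} (h : Commute a b) (v : H) :
    b⁻¹ * (a⁻¹ * v * a) * b = a⁻¹ * (b⁻¹ * v * b) * a := by
  calc b⁻¹ * (a⁻¹ * v * a) * b = b⁻¹ * a⁻¹ * v * (a * b) := by group
    _ = a⁻¹ * b⁻¹ * v * (b * a) := by rw [h.inv_inv.symm.eq, h.eq]
    _ = a⁻¹ * (b⁻¹ * v * b) * a := by group

lemma inv_conj_zpow' {H : Type*} [Group H] (a g : H) (n : ℤ) :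
    (a⁻¹ * g * a) ^ n = a⁻¹ * g ^ n * a := by
  have := conj_zpow (i := n) (a := a⁻¹) (b := g)
  simpa using this

end MoreHelpers

section MasterLemmas
variable {G : SimpleGraph V}

lemma aut_conj {H : Type*} [Group H] (φ : MulAut H) (c w : H) :
    φ (c⁻¹ * w * c) = (φ c)⁻¹ * φ w * φ c := by
  rw [map_mul, map_mul, map_inv]

/-- Two "partial-conjugation-like" automorphisms commute on the nose when each fixes the
other's multiplier and their supports either are disjoint or have commuting multipliers. -/
lemma exact_commute₁ {α β : MulAut (RAAG G)} {a b : RAAG G} {Y Z : Set V}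
    (hαY : ∀ v ∈ Y, α (gen G v) = a⁻¹ * gen G v * a) (hαn : ∀ v ∉ Y, α (gen G v) = gen G v)
    (hβZ : ∀ v ∈ Z, β (gen G v) = b⁻¹ * gen G v * b) (hβn : ∀ v ∉ Z, β (gen G v) = gen G v)
    (hαb : α b = b) (hβa : β a = a)
    (hcomm : ∀ v, v ∈ Y → v ∈ Z → Commute a b) :
    α * β = β * α := by
  apply raag_mulAut_ext; intro v
  simp only [MulAut.mul_apply]
  by_cases hvY : v ∈ Y <;> by_cases hvZ : v ∈ Z
  · have hL : α (β (gen G v)) = b⁻¹ * (a⁻¹ * gen G v * a) * b := by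
      rw [hβZ v hvZ, aut_conj, hαb, hαY v hvY]
    have hR : β (α (gen G v)) = a⁻¹ * (b⁻¹ * gen G v * b) * a := by
      rw [hαY v hvY, aut_conj, hβa, hβZ v hvZ]
    rw [hL, hR]
    exact conj_conj_comm (hcomm v hvY hvZ) (gen G v)
  · have hL : α (β (gen G v)) = a⁻¹ * gen G v * a := by rw [hβn v hvZ, hαY v hvY]
    have hR : β (α (gen G v)) = a⁻¹ * gen G v * a := by
      rw [hαY v hvY, aut_conj, hβa, hβn v hvZ]
    rw [hL, hR]
  · have hL : α (β (gen G v)) = b⁻¹ * gen G v * b := by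
      rw [hβZ v hvZ, aut_conj, hαb, hαn v hvY]
    have hR : β (α (gen G v)) = b⁻¹ * gen G v * b := by rw [hαn v hvY, hβZ v hvZ]
    rw [hL, hR]
  · have hL : α (β (gen G v)) = gen G v := by rw [hβn v hvZ, hαn v hvY]
    have hR : β (α (gen G v)) = gen G v := by rw [hαn v hvY, hβn v hvZ]
    rw [hL, hR]

/-- Nested supports: if `Z ⊆ Y`, `β` fixes `a` and `α` conjugates `b` by `a`,
the automorphisms commute on the nose. -/
lemma exact_commute₂ {α β : MulAut (RAAG G)} {a b : RAAG G} {Y Z : Set V}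
    (hαY : ∀ v ∈ Y, α (gen G v) = a⁻¹ * gen G v * a) (hαn : ∀ v ∉ Y, α (gen G v) = gen G v)
    (hβZ : ∀ v ∈ Z, β (gen G v) = b⁻¹ * gen G v * b) (hβn : ∀ v ∉ Z, β (gen G v) = gen G v)
    (hZY : Z ⊆ Y) (hαb : α b = a⁻¹ * b * a) (hβa : β a = a) :
    α * β = β * α := by
  apply raag_mulAut_ext; intro v
  simp only [MulAut.mul_apply]
  by_cases hvZ : v ∈ Z
  · have hL : α (β (gen G v)) = (a⁻¹ * b * a)⁻¹ * (a⁻¹ * gen G v * a) * (a⁻¹ * b * a) := by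
      rw [hβZ v hvZ, aut_conj, hαb, hαY v (hZY hvZ)]
    have hR : β (α (gen G v)) = a⁻¹ * (b⁻¹ * gen G v * b) * a := by
      rw [hαY v (hZY hvZ), aut_conj, hβa, hβZ v hvZ]
    rw [hL, hR]; group
  · by_cases hvY : v ∈ Y
    · have hL : α (β (gen G v)) = a⁻¹ * gen G v * a := by rw [hβn v hvZ, hαY v hvY]
      have hR : β (α (gen G v)) = a⁻¹ * gen G v * a := by
        rw [hαY v hvY, aut_conj, hβa, hβn v hvZ]
      rw [hL, hR]
    · have hL : α (β (gen G v)) = gen G v := by rw [hβn v hvZ, hαn v hvY]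
      have hR : β (α (gen G v)) = gen G v := by rw [hαn v hvY, hβn v hvZ]
      rw [hL, hR]

/-- The "crossed" case: each multiplier lies in the other's support; then the
automorphisms commute up to conjugation by `[b⁻¹, a⁻¹]`, provided every generator
outside both supports commutes with both multipliers. -/
lemma conj_commute₄ {α β : MulAut (RAAG G)} {a b : RAAG G} {Y Z : Set V}
    (hαY : ∀ v ∈ Y, α (gen G v) = a⁻¹ * gen G v * a) (hαn : ∀ v ∉ Y, α (gen G v) = gen G v)
    (hβZ : ∀ v ∈ Z, β (gen G v) = b⁻¹ * gen G v * b) (hβn : ∀ v ∉ Z, β (gen G v) = gen G v)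
    (hαb : α b = a⁻¹ * b * a) (hβa : β a = b⁻¹ * a * b)
    (hout : ∀ v, v ∉ Y → v ∉ Z → Commute (gen G v) a ∧ Commute (gen G v) b) :
    β * α = MulAut.conj (b⁻¹ * a⁻¹ * b * a) * (α * β) := by
  apply raag_mulAut_ext; intro v
  simp only [MulAut.mul_apply, MulAut.conj_apply]
  by_cases hvY : v ∈ Y <;> by_cases hvZ : v ∈ Z
  · have hL : β (α (gen G v)) = (b⁻¹ * a * b)⁻¹ * (b⁻¹ * gen G v * b) * (b⁻¹ * a * b) := by
      rw [hαY v hvY, aut_conj, hβa, hβZ v hvZ]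
    have hR : α (β (gen G v)) = (a⁻¹ * b * a)⁻¹ * (a⁻¹ * gen G v * a) * (a⁻¹ * b * a) := by
      rw [hβZ v hvZ, aut_conj, hαb, hαY v hvY]
    rw [hL, hR]; group
  · have hL : β (α (gen G v)) = (b⁻¹ * a * b)⁻¹ * gen G v * (b⁻¹ * a * b) := by
      rw [hαY v hvY, aut_conj, hβa, hβn v hvZ]
    have hR : α (β (gen G v)) = a⁻¹ * gen G v * a := by rw [hβn v hvZ, hαY v hvY]
    rw [hL, hR]; group
  · have hL : β (α (gen G v)) = b⁻¹ * gen G v * b := by rw [hαn v hvY, hβZ v hvZ]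
    have hR : α (β (gen G v)) = (a⁻¹ * b * a)⁻¹ * gen G v * (a⁻¹ * b * a) := by
      rw [hβZ v hvZ, aut_conj, hαb, hαn v hvY]
    rw [hL, hR]; group
  · obtain ⟨h1, h2⟩ := hout v hvY hvZ
    have hc : Commute (gen G v) (b⁻¹ * a⁻¹ * b * a) :=
      ((h2.inv_right.mul_right h1.inv_right).mul_right h2).mul_right h1
    have hL : β (α (gen G v)) = gen G v := by rw [hαn v hvY, hβn v hvZ]
    have hR : α (β (gen G v)) = gen G v := by rw [hβn v hvZ, hαn v hvY]
    rw [hL, hR, ← hc.eq, mul_inv_cancel_right]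

end MasterLemmas

/-- If `Γ` has no separating intersection of links, `α` is a non-inner
partial conjugation with multiplier `y^{±1}`, and `β` is either a transvection fixing the
generator `y` or any non-inner partial conjugation, then the images of `α` and `β`
commute in `Out(A_Γ)`. -/
theorem out_commute_partialConj [Fintype V] (G : SimpleGraph V)
    (h : ¬ SepIntLinks G) (α β : MulAut (RAAG G)) (y : V) (ε : ℤ) (Y : Set V)
    (hα : IsPartialConj G α y ε Y)
    (hβ : (∃ x z δ, IsTransvection G β x z δ ∧ β (gen G y) = gen G y) ∨
          (∃ x δ Z, IsPartialConj G β x δ Z)) :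
    (QuotientGroup.mk α : OutG G) * QuotientGroup.mk β =
      QuotientGroup.mk β * QuotientGroup.mk α := by
  obtain ⟨hε, hYcomp, -, hαY', hαn⟩ := hα
  set a := gen G y ^ ε with ha
  have hαY : ∀ v ∈ Y, α (gen G v) = a⁻¹ * gen G v * a := by
    intro v hv; rw [ha, hαY' v hv, zpow_neg]
  have hyY : y ∉ Y := fun hh => (mem_st_compl_iff'.mp (hYcomp.2.1 hh)).1 rfl
  have mkmul : ∀ φ ψ : MulAut (RAAG G),
      (QuotientGroup.mk (φ * ψ) : OutG G) = QuotientGroup.mk φ * QuotientGroup.mk ψ :=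
    fun _ _ => rfl
  have key_exact : ∀ {φ ψ : MulAut (RAAG G)}, φ * ψ = ψ * φ →
      (QuotientGroup.mk φ : OutG G) * QuotientGroup.mk ψ =
        QuotientGroup.mk ψ * QuotientGroup.mk φ := by
    intro φ ψ hh
    rw [← mkmul, ← mkmul, hh]
  rcases hβ with ⟨x, z, δ, ⟨hxz, hdom, hδ, hact, hfixoth⟩, hfix⟩ |
    ⟨x, δ, Z, hδ, hZcomp, -, hβZ', hβn⟩
  · -- Case: β is a transvection with multiplier x^δ on z, fixing gen y.
    set b := gen G x ^ δ with hb
    have hzy : z ≠ y := by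
      intro hzeq
      rcases hact with h1 | h1
      · rw [hzeq, hfix] at h1
        exact gen_zpow_ne_one x hδ (mul_eq_left.mp h1.symm)
      · rw [hzeq, hfix] at h1
        exact gen_zpow_ne_one x hδ (mul_eq_right.mp h1.symm)
    have hβa : β a = a := by rw [ha, map_zpow, hfix]
    apply key_exact
    apply raag_mulAut_ext; intro v
    simp only [MulAut.mul_apply]
    by_cases hvz : v = z
    · subst hvz
      by_cases hzY : v ∈ Y <;> by_cases hxY : x ∈ Y
      · -- z ∈ Y, x ∈ Y : exact commutation
        have hαb : α b = a⁻¹ * b * a := by rw [hb, map_zpow, hαY x hxY, inv_conj_zpow']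
        rcases hact with h1 | h1
        · have hL : α (β (gen G v)) = (a⁻¹ * gen G v * a) * (a⁻¹ * b * a) := by
            rw [h1, map_mul, hαY v hzY, hαb]
          have hR : β (α (gen G v)) = a⁻¹ * (gen G v * b) * a := by
            rw [hαY v hzY, aut_conj, hβa, h1]
          rw [hL, hR]; group
        · have hL : α (β (gen G v)) = (a⁻¹ * b * a) * (a⁻¹ * gen G v * a) := by
            rw [h1, map_mul, hαY v hzY, hαb]
          have hR : β (α (gen G v)) = a⁻¹ * (b * gen G v) * a := by
            rw [hαY v hzY, aut_conj, hβa, h1]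
          rw [hL, hR]; group
      · -- z ∈ Y, x ∉ Y : multipliers must commute (else SIL)
        have hcab : Commute a b := by
          by_cases hxy' : x = y
          · subst hxy'
            exact (Commute.refl (gen G x)).zpow_zpow ε δ
          · by_cases hadj : G.Adj y x
            · exact (gen_commute hadj).zpow_zpow ε δ
            · exfalso; apply h
              have hxsty : x ∈ (st G y)ᶜ := mem_st_compl_iff'.mpr ⟨hxy', hadj⟩
              have hznex : v ≠ x := fun hh => hxY (hh ▸ hzY)
              have hnadjxz : ¬ G.Adj x v := fun hh =>
                hxY (hYcomp.closed hzY hxsty hh.symm)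
              exact sil_of_comps hxy' (fun hh => hadj hh.symm)
                (Y := Y) (Z := {v}) hYcomp.2.1
                (Set.singleton_subset_iff.mpr (mem_st_compl_iff'.mpr ⟨hznex, hnadjxz⟩))
                (fun u w hu hw ha2 => hYcomp.closed hu hw ha2)
                (fun u w hu hw ha2 => by
                  rw [Set.mem_singleton_iff] at hu; rw [hu] at ha2
                  exact absurd (hdom (show w ∈ lk G v from ha2)) hw)
                hxY (fun hh => hzy (Set.mem_singleton_iff.mp hh).symm)
                hzY (Set.mem_singleton _)
        have hαb : α b = b := by rw [hb, map_zpow, hαn x hxY]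
        rcases hact with h1 | h1
        · have hL : α (β (gen G v)) = (a⁻¹ * gen G v * a) * b := by
            rw [h1, map_mul, hαY v hzY, hαb]
          have hR : β (α (gen G v)) = a⁻¹ * (gen G v * b) * a := by
            rw [hαY v hzY, aut_conj, hβa, h1]
          rw [hL, hR]
          calc (a⁻¹ * gen G v * a) * b = a⁻¹ * gen G v * (a * b) := by group
            _ = a⁻¹ * gen G v * (b * a) := by rw [hcab.eq]
            _ = a⁻¹ * (gen G v * b) * a := by group
        · have hL : α (β (gen G v)) = b * (a⁻¹ * gen G v * a) := by
            rw [h1, map_mul, hαY v hzY, hαb]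
          have hR : β (α (gen G v)) = a⁻¹ * (b * gen G v) * a := by
            rw [hαY v hzY, aut_conj, hβa, h1]
          rw [hL, hR]
          calc b * (a⁻¹ * gen G v * a) = (b * a⁻¹) * gen G v * a := by group
            _ = (a⁻¹ * b) * gen G v * a := by rw [← hcab.inv_left.eq]
            _ = a⁻¹ * (b * gen G v) * a := by group
      · -- z ∉ Y, x ∈ Y : impossible without SIL
        exfalso
        have hxsty : x ∈ (st G y)ᶜ := hYcomp.2.1 hxY
        obtain ⟨hxny, hnadjyx⟩ := mem_st_compl_iff'.mp hxsty
        by_cases hzsty : v ∈ st G y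
        · rcases mem_st_iff'.mp hzsty with hh | hh
          · exact hzy hh
          · have hyst : y ∈ st G x := hdom (show y ∈ lk G v from hh.symm)
            rcases mem_st_iff'.mp hyst with hh2 | hh2
            · exact hxny hh2.symm
            · exact hnadjyx hh2.symm
        · have hzsty' : v ∈ (st G y)ᶜ := hzsty
          have hznex : v ≠ x := fun hh => hzY (hh ▸ hxY)
          have hnadjxz : ¬ G.Adj x v := fun hh => hzY (hYcomp.closed hxY hzsty' hh)
          apply h
          exact sil_of_comps hxny (fun hh => hnadjyx hh.symm)
            (Y := reachSet G ((st G y)ᶜ) v) (Z := {v}) reachSet_subset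
            (Set.singleton_subset_iff.mpr (mem_st_compl_iff'.mpr ⟨hznex, hnadjxz⟩))
            (fun u w hu hw ha2 => reachSet_closed hu hw ha2)
            (fun u w hu hw ha2 => by
              rw [Set.mem_singleton_iff] at hu; rw [hu] at ha2
              exact absurd (hdom (show w ∈ lk G v from ha2)) hw)
            (notMem_reachSet hYcomp hxY hzsty' hzY)
            (fun hh => hzy (Set.mem_singleton_iff.mp hh).symm)
            (mem_reachSet_self hzsty') (Set.mem_singleton _)
      · -- z ∉ Y, x ∉ Y : both fixed
        have hαb : α b = b := by rw [hb, map_zpow, hαn x hxY]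
        rcases hact with h1 | h1
        · have hL : α (β (gen G v)) = gen G v * b := by
            rw [h1, map_mul, hαn v hzY, hαb]
          have hR : β (α (gen G v)) = gen G v * b := by rw [hαn v hzY, h1]
          rw [hL, hR]
        · have hL : α (β (gen G v)) = b * gen G v := by
            rw [h1, map_mul, hαn v hzY, hαb]
          have hR : β (α (gen G v)) = b * gen G v := by rw [hαn v hzY, h1]
          rw [hL, hR]
    · -- v ≠ z : β fixes gen v
      have hfv : β (gen G v) = gen G v := hfixoth v hvz
      by_cases hvY : v ∈ Y
      · have hL : α (β (gen G v)) = a⁻¹ * gen G v * a := by rw [hfv, hαY v hvY]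
        have hR : β (α (gen G v)) = a⁻¹ * gen G v * a := by
          rw [hαY v hvY, aut_conj, hβa, hfv]
        rw [hL, hR]
      · have hL : α (β (gen G v)) = gen G v := by rw [hfv, hαn v hvY]
        have hR : β (α (gen G v)) = gen G v := by rw [hαn v hvY, hfv]
        rw [hL, hR]
  · -- Case: β is a partial conjugation with multiplier x^δ on Z.
    set b := gen G x ^ δ with hb
    have hβZ : ∀ v ∈ Z, β (gen G v) = b⁻¹ * gen G v * b := by
      intro v hv; rw [hb, hβZ' v hv, zpow_neg]
    have hxZ : x ∉ Z := fun hh => (mem_st_compl_iff'.mp (hZcomp.2.1 hh)).1 rfl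
    by_cases hxy' : x = y
    · -- same multiplier vertex
      subst hxy'
      have hαb : α b = b := by rw [hb, map_zpow, hαn x hyY]
      have hβa : β a = a := by rw [ha, map_zpow, hβn x hxZ]
      exact key_exact (exact_commute₁ hαY hαn hβZ hβn hαb hβa
        (fun v _ _ => (Commute.refl (gen G x)).zpow_zpow ε δ))
    · by_cases hadj : G.Adj x y
      · -- adjacent multipliers commute
        have hxY : x ∉ Y := fun hh => (mem_st_compl_iff'.mp (hYcomp.2.1 hh)).2 hadj.symm
        have hyZ : y ∉ Z := fun hh => (mem_st_compl_iff'.mp (hZcomp.2.1 hh)).2 hadj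
        have hαb : α b = b := by rw [hb, map_zpow, hαn x hxY]
        have hβa : β a = a := by rw [ha, map_zpow, hβn y hyZ]
        exact key_exact (exact_commute₁ hαY hαn hβZ hβn hαb hβa
          (fun v _ _ => ((gen_commute hadj).symm.zpow_zpow ε δ)))
      · -- distinct non-adjacent multipliers
        have hnadjyx : ¬ G.Adj y x := fun hh => hadj hh.symm
        have hxsty : x ∈ (st G y)ᶜ := mem_st_compl_iff'.mpr ⟨hxy', hnadjyx⟩
        have hysx : y ∈ (st G x)ᶜ := mem_st_compl_iff'.mpr ⟨fun hh => hxy' hh.symm, hadj⟩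
        by_cases hxY : x ∈ Y <;> by_cases hyZ : y ∈ Z
        · -- crossed case: commute up to an inner automorphism
          have hαb : α b = a⁻¹ * b * a := by rw [hb, map_zpow, hαY x hxY, inv_conj_zpow']
          have hβa : β a = b⁻¹ * a * b := by rw [ha, map_zpow, hβZ y hyZ, inv_conj_zpow']
          have hout : ∀ v, v ∉ Y → v ∉ Z → Commute (gen G v) a ∧ Commute (gen G v) b := by
            intro v hvY hvZ
            by_cases hvx : v ∈ st G x <;> by_cases hvy : v ∈ st G y
            · have hvnex : v ≠ x := fun hh => hvY (hh ▸ hxY)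
              have hvney : v ≠ y := fun hh => hvZ (hh ▸ hyZ)
              have hadjxv : G.Adj x v := (mem_st_iff'.mp hvx).resolve_left hvnex
              have hadjyv : G.Adj y v := (mem_st_iff'.mp hvy).resolve_left hvney
              exact ⟨((gen_commute hadjyv).symm.zpow_right ε),
                ((gen_commute hadjxv).symm.zpow_right δ)⟩
            · exfalso
              have hvnex : v ≠ x := fun hh => hvY (hh ▸ hxY)
              have hadjxv : G.Adj x v := (mem_st_iff'.mp hvx).resolve_left hvnex
              exact hvY (hYcomp.closed hxY (show v ∈ (st G y)ᶜ from hvy) hadjxv)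
            · exfalso
              have hvney : v ≠ y := fun hh => hvZ (hh ▸ hyZ)
              have hadjyv : G.Adj y v := (mem_st_iff'.mp hvy).resolve_left hvney
              exact hvZ (hZcomp.closed hyZ (show v ∈ (st G x)ᶜ from hvx) hadjyv)
            · exfalso; apply h
              have hvx' : v ∈ (st G x)ᶜ := hvx
              have hvy' : v ∈ (st G y)ᶜ := hvy
              exact sil_of_comps hxy' hadj
                (Y := reachSet G ((st G y)ᶜ) v) (Z := reachSet G ((st G x)ᶜ) v)
                reachSet_subset reachSet_subset
                (fun u w hu hw ha2 => reachSet_closed hu hw ha2)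
                (fun u w hu hw ha2 => reachSet_closed hu hw ha2)
                (notMem_reachSet hYcomp hxY hvy' hvY)
                (notMem_reachSet hZcomp hyZ hvx' hvZ)
                (mem_reachSet_self hvy') (mem_reachSet_self hvx')
          have hc := conj_commute₄ hαY hαn hβZ hβn hαb hβa hout
          have h1 : (QuotientGroup.mk (MulAut.conj (b⁻¹ * a⁻¹ * b * a)) : OutG G) = 1 :=
            (QuotientGroup.eq_one_iff _).mpr ⟨b⁻¹ * a⁻¹ * b * a, rfl⟩
          calc (QuotientGroup.mk α : OutG G) * QuotientGroup.mk β
              = QuotientGroup.mk (α * β) := (mkmul α β).symm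
            _ = (1 : OutG G) * QuotientGroup.mk (α * β) := (one_mul _).symm
            _ = QuotientGroup.mk (MulAut.conj (b⁻¹ * a⁻¹ * b * a)) *
                QuotientGroup.mk (α * β) := by rw [h1]
            _ = QuotientGroup.mk (MulAut.conj (b⁻¹ * a⁻¹ * b * a) * (α * β)) :=
                (mkmul _ _).symm
            _ = QuotientGroup.mk (β * α) := by rw [← hc]
            _ = QuotientGroup.mk β * QuotientGroup.mk α := mkmul _ _
        · -- x ∈ Y, y ∉ Z : Z ⊆ Y
          have hZY : Z ⊆ Y := by
            intro v hvZ
            by_contra hvY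
            have hvney : v ≠ y := fun hh => hyZ (hh ▸ hvZ)
            have hvsty : v ∈ (st G y)ᶜ := mem_st_compl_iff'.mpr
              ⟨hvney, fun hh => hyZ (hZcomp.closed hvZ hysx hh.symm)⟩
            apply h
            exact sil_of_comps hxy' hadj
              (Y := reachSet G ((st G y)ᶜ) v) (Z := Z) reachSet_subset hZcomp.2.1
              (fun u w hu hw ha2 => reachSet_closed hu hw ha2)
              (fun u w hu hw ha2 => hZcomp.closed hu hw ha2)
              (notMem_reachSet hYcomp hxY hvsty hvY) hyZ
              (mem_reachSet_self hvsty) hvZ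
          have hαb : α b = a⁻¹ * b * a := by rw [hb, map_zpow, hαY x hxY, inv_conj_zpow']
          have hβa : β a = a := by rw [ha, map_zpow, hβn y hyZ]
          exact key_exact (exact_commute₂ hαY hαn hβZ hβn hZY hαb hβa)
        · -- x ∉ Y, y ∈ Z : Y ⊆ Z
          have hYZ : Y ⊆ Z := by
            intro v hvY'
            by_contra hvZ'
            have hvnex : v ≠ x := fun hh => hxY (hh ▸ hvY')
            have hvstx : v ∈ (st G x)ᶜ := mem_st_compl_iff'.mpr
              ⟨hvnex, fun hh => hxY (hYcomp.closed hvY' hxsty hh.symm)⟩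
            apply h
            exact sil_of_comps hxy' hadj
              (Y := Y) (Z := reachSet G ((st G x)ᶜ) v) hYcomp.2.1 reachSet_subset
              (fun u w hu hw ha2 => hYcomp.closed hu hw ha2)
              (fun u w hu hw ha2 => reachSet_closed hu hw ha2)
              hxY (notMem_reachSet hZcomp hyZ hvstx hvZ')
              hvY' (mem_reachSet_self hvstx)
          have hβa : β a = b⁻¹ * a * b := by rw [ha, map_zpow, hβZ y hyZ, inv_conj_zpow']
          have hαb : α b = b := by rw [hb, map_zpow, hαn x hxY]
          exact key_exact ((exact_commute₂ hβZ hβn hαY hαn hYZ hβa hαb).symm)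
        · -- x ∉ Y, y ∉ Z : disjoint supports
          have hαb : α b = b := by rw [hb, map_zpow, hαn x hxY]
          have hβa : β a = a := by rw [ha, map_zpow, hβn y hyZ]
          have hdisj : ∀ v, v ∈ Y → v ∈ Z → Commute a b := by
            intro v hvY hvZ
            exfalso; apply h
            exact sil_of_comps hxy' hadj hYcomp.2.1 hZcomp.2.1
              (fun u w hu hw ha2 => hYcomp.closed hu hw ha2)
              (fun u w hu hw ha2 => hZcomp.closed hu hw ha2)
              hxY hyZ hvY hvZ
          exact key_exact (exact_commute₁ hαY hαn hβZ hβn hαb hβa hdisj)
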